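/- For every θ with |θ| < π/2 there exists a bounded subset Ω of SL(2,ℝ) such that for every t ≥ 0 there is w ∈ Ω with g_t · h_{−tan θ} = w · g_t · r_θ, where g_t = [[e^{t/2}, 0],[0, e^{−t/2}]], h_s = [[1, s],[0, 1]], and r_θ = [[cos θ, −sin θ],[sin θ, cos θ]]. (In particular, the set {g_t x g_{−t} : t ≥ 0} with x = [[1/cos θ, 0],[−sin θ, cos θ]] is bounded and satisfies this identity.) -/

import Mathlib

open Real

/-- Proposition: horocycles and circles. For `|θ| < π/2` there is a bounded
subset `Ω ⊆ SL(2,ℝ)` such that for every `t ≥ 0` there is `w ∈ Ω` with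
`g_t · h_{-tan θ} = w · g_t · r_θ`. (A subset of `SL(2,ℝ)` is bounded iff its entries are
uniformly bounded.) -/
theorem horocycles_and_circles (θ : ℝ) (hθ : |θ| < Real.pi / 2) :
    ∃ Ω : Set (Matrix (Fin 2) (Fin 2) ℝ),
      (∃ M : ℝ, ∀ w ∈ Ω, ∀ i j : Fin 2, |w i j| ≤ M) ∧
      (∀ w ∈ Ω, w.det = 1) ∧
      ∀ t : ℝ, 0 ≤ t → ∃ w ∈ Ω,
        (!![Real.exp (t / 2), 0; 0, Real.exp (-t / 2)] : Matrix (Fin 2) (Fin 2) ℝ) *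
            !![1, -Real.tan θ; 0, 1] =
          w * ((!![Real.exp (t / 2), 0; 0, Real.exp (-t / 2)] : Matrix (Fin 2) (Fin 2) ℝ) *
            !![Real.cos θ, -Real.sin θ; Real.sin θ, Real.cos θ]) := by
  have hcos : 0 < Real.cos θ := Real.cos_pos_of_mem_Ioo (abs_lt.mp hθ |>.imp id id)
  refine ⟨{w | ∃ t : ℝ, 0 ≤ t ∧
      w = !![1 / Real.cos θ, 0; -Real.exp (-t) * Real.sin θ, Real.cos θ]}, ?_, ?_, ?_⟩
  · refine ⟨(Real.cos θ)⁻¹ + 1, ?_⟩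
    rintro w ⟨t, ht, rfl⟩ i j
    have hpos : 0 < (Real.cos θ)⁻¹ := by positivity
    have hc1 : Real.cos θ ≤ 1 := Real.cos_le_one θ
    have he : Real.exp (-t) ≤ 1 := Real.exp_le_one_iff.mpr (by linarith)
    have hs : |Real.sin θ| ≤ 1 := abs_sin_le_one θ
    have hb1 : |(Real.cos θ)⁻¹| ≤ (Real.cos θ)⁻¹ + 1 := by
      rw [abs_of_pos hpos]; linarith
    have hb0 : (0 : ℝ) ≤ (Real.cos θ)⁻¹ + 1 := by linarith
    have hb2 : |Real.exp (-t) * Real.sin θ| ≤ (Real.cos θ)⁻¹ + 1 := by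
      rw [abs_mul, abs_of_pos (Real.exp_pos _)]
      nlinarith [abs_nonneg (Real.sin θ), Real.exp_pos (-t)]
    have hb3 : |Real.cos θ| ≤ (Real.cos θ)⁻¹ + 1 := by
      rw [abs_of_pos hcos]; linarith
    fin_cases i <;> fin_cases j <;> simp [one_div] <;>
      first
        | exact hb1
        | exact hb0
        | exact hb2
        | exact hb3
        | simpa using hb1
        | simpa using hb2
  · rintro w ⟨t, ht, rfl⟩
    simp [Matrix.det_fin_two_of]
    field_simp
  · intro t ht
    refine ⟨_, ⟨t, ht, rfl⟩, ?_⟩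
    have hne : Real.cos θ ≠ 0 := ne_of_gt hcos
    have hee2 : Real.exp (-t) * Real.exp (t / 2) = Real.exp (-t / 2) := by
      rw [← Real.exp_add]; ring_nf
    have hsq := Real.sin_sq_add_cos_sq θ
    ext i j
    fin_cases i <;> fin_cases j <;>
        simp [Matrix.mul_apply, Fin.sum_univ_two, Real.tan_eq_sin_div_cos] <;>
        (try field_simp)
    · simp only [← neg_div]
      linear_combination (Real.sin θ * Real.cos θ) * hee2
    · simp only [← neg_div]
      linear_combination (-Real.sin θ ^ 2) * hee2 + (-Real.exp (-t / 2)) * hsq
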